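/- Let μ, δ ∈ ℝ satisfy 0 < δ < 1/μ < 1 < μ. Let A = diag(1, μ) ∈ ℂ^{2×2}, B = J₂ = diag(1, −1) ∈ ℂ^{2×2}. For σ ∈ (−1,1) let Q(σ) = [[√(1−σ²), −σ], [σ, √(1−σ²)]] and D(σ) = Q(σ)ᴴ · diag(1, δ) · Q(σ) (a positive definite Hermitian matrix). Then 1 + δμ < μ + δ, and there exist σ ∈ (−1,1) with σ ≠ 0 and X ∈ ℂ^{2×2} such that Xᴴ B X = J₂ and Re(trace(D(σ) Xᴴ A X)) < 1 + δμ. Consequently, for this choice of σ, the infimum of trace(D(σ) Xᴴ A X) over Xᴴ B X = J₂ is strictly less than min{1 + δμ, μ + δ}, so it cannot equal either of the two possible sums of pairwise products of the eigenvalues {1, δ} of D(σ) with the pencil eigenvalues {1, −μ} of A − λB. -/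

import Mathlib

open Matrix BigOperators
open scoped ComplexOrder

/-- The matrix `A = diag(1, μ)` of the paper's example in section 3. -/
noncomputable def exampleA (μ : ℝ) : Matrix (Fin 2) (Fin 2) ℂ := !![1, 0; 0, (μ : ℂ)]

/-- The matrix `B = J₂ = diag(1, -1)` of the paper's example in section 3. -/
def exampleB : Matrix (Fin 2) (Fin 2) ℂ := !![1, 0; 0, -1]

/-- The rotation-like matrix `Q(σ)` of the paper's example in section 3. -/
noncomputable def exampleQ (σ : ℝ) : Matrix (Fin 2) (Fin 2) ℂ :=
  !![(Real.sqrt (1 - σ ^ 2) : ℂ), -(σ : ℂ); (σ : ℂ), (Real.sqrt (1 - σ ^ 2) : ℂ)]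

/-- The matrix `D(σ) = Q(σ)ᴴ diag(1, δ) Q(σ)` of the paper's example in section 3. -/
noncomputable def exampleD (δ σ : ℝ) : Matrix (Fin 2) (Fin 2) ℂ :=
  (exampleQ σ)ᴴ * !![1, 0; 0, (δ : ℂ)] * exampleQ σ

private lemma posDef_conj_aux {M Q : Matrix (Fin 2) (Fin 2) ℂ} (hM : M.PosDef)
    (hQ : IsUnit Q.det) : (Qᴴ * M * Q).PosDef := by
  exact hM.conjTranspose_mul_mul_same
    (Matrix.mulVec_injective_iff_isUnit.2 ((Matrix.isUnit_iff_isUnit_det Q).2 hQ))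

private lemma feasible_aux (ch sh : ℝ) (h : ch ^ 2 = 1 + sh ^ 2) :
    (!![(ch : ℂ), (sh : ℂ); (sh : ℂ), (ch : ℂ)])ᴴ * exampleB *
      !![(ch : ℂ), (sh : ℂ); (sh : ℂ), (ch : ℂ)] = exampleB := by
  have h' : ((ch : ℂ)) ^ 2 = 1 + ((sh : ℂ)) ^ 2 := by exact_mod_cast h
  ext i j
  fin_cases i <;> fin_cases j <;>
    simp [exampleB, Matrix.mul_apply, Fin.sum_univ_two, Matrix.conjTranspose_apply]
  all_goals first | linear_combination h' | linear_combination -h' | ring1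

private lemma trace_aux (μ δ σ ch sh : ℝ) :
    (Matrix.trace (exampleD δ σ * ((!![(ch : ℂ), (sh : ℂ); (sh : ℂ), (ch : ℂ)])ᴴ *
        exampleA μ * !![(ch : ℂ), (sh : ℂ); (sh : ℂ), (ch : ℂ)]))).re =
      ((Real.sqrt (1 - σ ^ 2)) ^ 2 + δ * σ ^ 2) * (ch ^ 2 + μ * sh ^ 2)
        - 2 * (1 - δ) * (Real.sqrt (1 - σ ^ 2)) * σ * (1 + μ) * ch * sh
        + (σ ^ 2 + δ * (Real.sqrt (1 - σ ^ 2)) ^ 2) * (sh ^ 2 + μ * ch ^ 2) := by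
  have h : (Matrix.trace (exampleD δ σ * ((!![(ch : ℂ), (sh : ℂ); (sh : ℂ), (ch : ℂ)])ᴴ *
        exampleA μ * !![(ch : ℂ), (sh : ℂ); (sh : ℂ), (ch : ℂ)]))) =
      ((((Real.sqrt (1 - σ ^ 2)) ^ 2 + δ * σ ^ 2) * (ch ^ 2 + μ * sh ^ 2)
        - 2 * (1 - δ) * (Real.sqrt (1 - σ ^ 2)) * σ * (1 + μ) * ch * sh
        + (σ ^ 2 + δ * (Real.sqrt (1 - σ ^ 2)) ^ 2) * (sh ^ 2 + μ * ch ^ 2) : ℝ) : ℂ) := by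
    simp [exampleD, exampleQ, exampleA, Matrix.trace, Matrix.mul_apply, Fin.sum_univ_two,
      Matrix.conjTranspose_apply]
    ring
  rw [h, Complex.ofReal_re]

set_option maxHeartbeats 2000000 in
/-- The paper's example showing that in Corollary 3.3 the matrix `D` must be block
diagonal conformally with `J_k`: for `0 < δ < 1/μ < 1 < μ` there is `σ ≠ 0` and a
feasible `X` (with `Xᴴ B X = J₂`) making `Re(trace(D(σ) Xᴴ A X))` smaller than
`1 + δμ = min{1 + δμ, μ + δ}`, so the infimum is below both candidate sums of
products of the eigenvalues `{1, δ}` of `D(σ)` with the pencil eigenvalues `{1, -μ}`. -/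
theorem example_D_not_block_diagonal
    (μ δ : ℝ) (h1 : 0 < δ) (h2 : δ < 1 / μ) (h3 : 1 / μ < 1) (h4 : 1 < μ) :
    1 + δ * μ < μ + δ ∧
    ∃ σ : ℝ, σ ∈ Set.Ioo (-1 : ℝ) 1 ∧ σ ≠ 0 ∧
      (exampleD δ σ).PosDef ∧ (exampleD δ σ).IsHermitian ∧
      (∃ X : Matrix (Fin 2) (Fin 2) ℂ,
        Xᴴ * exampleB * X = exampleB ∧
        (Matrix.trace (exampleD δ σ * (Xᴴ * exampleA μ * X))).re < 1 + δ * μ) ∧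
      sInf {t : ℝ | ∃ X : Matrix (Fin 2) (Fin 2) ℂ,
          Xᴴ * exampleB * X = exampleB ∧
          t = (Matrix.trace (exampleD δ σ * (Xᴴ * exampleA μ * X))).re}
        < min (1 + δ * μ) (μ + δ) := by
  have hμ0 : (0 : ℝ) < μ := lt_trans one_pos h4
  have hδ1 : δ < 1 := h2.trans h3
  have hδμ : δ * μ < 1 := (lt_div_iff₀ hμ0).mp h2
  have hfirst : 1 + δ * μ < μ + δ := by nlinarith [mul_pos (sub_pos.2 h4) (sub_pos.2 hδ1)]
  refine ⟨hfirst, ?_⟩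
  -- choose the parameters
  set α : ℝ := (1 - δ) / (1 + δ) with hαdef
  set ε : ℝ := (1 - δ * μ) / ((1 + μ) * (1 - δ)) with hεdef
  have hδ1' : (0 : ℝ) < 1 - δ := by linarith
  have hδp : (0 : ℝ) < 1 + δ := by linarith
  have hμp : (0 : ℝ) < 1 + μ := by linarith
  have hα0 : 0 < α := div_pos hδ1' hδp
  have hε0 : 0 < ε := div_pos (by linarith) (mul_pos hμp hδ1')
  set s : ℝ := Real.sqrt (min ε 1) / 2 with hsdef
  have hmin0 : 0 < min ε 1 := lt_min hε0 one_pos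
  have hs0 : 0 < s := by positivity
  have hsqs : Real.sqrt (min ε 1) ≤ 1 := Real.sqrt_le_one.mpr (min_le_right _ _)
  have hs1 : s < 1 := by rw [hsdef]; linarith
  have hs2 : s ^ 2 < ε := by
    have : s ^ 2 = min ε 1 / 4 := by
      rw [hsdef, div_pow, Real.sq_sqrt hmin0.le]; norm_num
    have hmle : min ε 1 ≤ ε := min_le_left _ _
    nlinarith
  set sh : ℝ := α * s with hshdef
  set ch : ℝ := Real.sqrt (1 + sh ^ 2) with hchdef
  have hch2 : ch ^ 2 = 1 + sh ^ 2 := Real.sq_sqrt (by positivity)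
  have hch0 : 0 ≤ ch := Real.sqrt_nonneg _
  have hch1 : 1 ≤ ch := by nlinarith [sq_nonneg sh]
  set c : ℝ := Real.sqrt (1 - s ^ 2) with hcdef
  have hs21 : s ^ 2 < 1 := by nlinarith
  have hc2 : c ^ 2 = 1 - s ^ 2 := Real.sq_sqrt (by linarith)
  have hc0 : 0 < c := Real.sqrt_pos.mpr (by linarith)
  have hc1 : c ≤ 1 := by nlinarith [sq_nonneg (c - 1)]
  have hcch : 1 - s ^ 2 ≤ c * ch := by
    have ha : c ≤ c * ch := le_mul_of_one_le_right hc0.le hch1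
    have hb : c * c ≤ c * 1 := mul_le_mul_of_nonneg_left hc1 hc0.le
    have hb2 : c ^ 2 ≤ c := by rw [pow_two]; linarith
    linarith
  -- positive definiteness of D
  have hMd : (!![1, 0; 0, (δ : ℂ)]) = Matrix.diagonal ![1, (δ : ℂ)] := by
    ext i j
    fin_cases i <;> fin_cases j <;> simp [Matrix.diagonal]
  have hMpd : (!![1, 0; 0, (δ : ℂ)]).PosDef := by
    rw [hMd]
    refine Matrix.posDef_diagonal_iff.mpr fun i => ?_
    fin_cases i <;> simp
    exact h1
  have hdet : (exampleQ s).det = 1 := by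
    rw [exampleQ, Matrix.det_fin_two_of]
    have hcc : ((c : ℂ)) ^ 2 = 1 - ((s : ℂ)) ^ 2 := by exact_mod_cast hc2
    rw [← hcdef]
    linear_combination hcc
  have hDpd : (exampleD δ s).PosDef := by
    rw [exampleD]
    exact posDef_conj_aux hMpd (by rw [hdet]; exact isUnit_one)
  -- the feasible X
  set X : Matrix (Fin 2) (Fin 2) ℂ := !![(ch : ℂ), (sh : ℂ); (sh : ℂ), (ch : ℂ)] with hXdef
  have hXfeas : Xᴴ * exampleB * X = exampleB := feasible_aux ch sh hch2
  have htrace : (Matrix.trace (exampleD δ s * (Xᴴ * exampleA μ * X))).re =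
      (c ^ 2 + δ * s ^ 2) * (ch ^ 2 + μ * sh ^ 2)
        - 2 * (1 - δ) * c * s * (1 + μ) * ch * sh
        + (s ^ 2 + δ * c ^ 2) * (sh ^ 2 + μ * ch ^ 2) := by
    rw [hXdef]
    rw [trace_aux μ δ s ch sh, ← hcdef]
  -- the key inequality
  have hkey : (1 + μ) * (1 + δ) * sh ^ 2 + (1 - δ) * (μ - 1) * s ^ 2
      < 2 * (1 - δ) * (1 + μ) * c * s * ch * sh := by
    have hident : 2 * (1 - δ) * (1 + μ) * α * (s ^ 2 * (1 - s ^ 2))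
        - ((1 + μ) * (1 + δ) * (α * s) ^ 2 + (1 - δ) * (μ - 1) * s ^ 2)
        = s ^ 2 * (2 * ((1 - δ) * (1 + μ) * α) * (ε - s ^ 2)) := by
      rw [hαdef, hεdef]
      field_simp
      ring
    have hpos : 0 < s ^ 2 * (2 * ((1 - δ) * (1 + μ) * α) * (ε - s ^ 2)) := by
      have := sub_pos.2 hs2
      positivity
    have h6 : 2 * (1 - δ) * (1 + μ) * α * (s ^ 2 * (1 - s ^ 2))
        ≤ 2 * (1 - δ) * (1 + μ) * α * (s ^ 2 * (c * ch)) := by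
      apply mul_le_mul_of_nonneg_left _ (by positivity)
      exact mul_le_mul_of_nonneg_left hcch (sq_nonneg s)
    have h7 : (1 + μ) * (1 + δ) * sh ^ 2 + (1 - δ) * (μ - 1) * s ^ 2
        < 2 * (1 - δ) * (1 + μ) * α * (s ^ 2 * (1 - s ^ 2)) := by
      rw [hshdef]; linarith [hident, hpos]
    have h8 : 2 * (1 - δ) * (1 + μ) * α * (s ^ 2 * (c * ch))
        = 2 * (1 - δ) * (1 + μ) * c * s * ch * sh := by
      rw [hshdef]; ring
    linarith
  have hE : (Matrix.trace (exampleD δ s * (Xᴴ * exampleA μ * X))).re < 1 + δ * μ := by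
    rw [htrace]
    have hident2 : (c ^ 2 + δ * s ^ 2) * (ch ^ 2 + μ * sh ^ 2)
        - 2 * (1 - δ) * c * s * (1 + μ) * ch * sh
        + (s ^ 2 + δ * c ^ 2) * (sh ^ 2 + μ * ch ^ 2)
        = 1 + δ * μ + (1 + μ) * (1 + δ) * sh ^ 2 + (1 - δ) * (μ - 1) * s ^ 2
          - 2 * (1 - δ) * (1 + μ) * c * s * ch * sh := by
      linear_combination ((ch ^ 2 + μ * sh ^ 2) + δ * (sh ^ 2 + μ * ch ^ 2)) * hc2
        + ((1 + (δ - 1) * s ^ 2) + μ * (δ + (1 - δ) * s ^ 2)) * hch2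
    rw [hident2]
    linarith only [hkey]
  refine ⟨s, Set.mem_Ioo.mpr ⟨neg_one_lt_zero.trans hs0, hs1⟩, ne_of_gt hs0, hDpd, hDpd.1,
    ⟨X, hXfeas, hE⟩, ?_⟩
  -- the infimum claim
  have hmineq : min (1 + δ * μ) (μ + δ) = 1 + δ * μ := min_eq_left hfirst.le
  rw [hmineq]
  set S : Set ℝ := {t : ℝ | ∃ X : Matrix (Fin 2) (Fin 2) ℂ,
      Xᴴ * exampleB * X = exampleB ∧
      t = (Matrix.trace (exampleD δ s * (Xᴴ * exampleA μ * X))).re} with hSdef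
  have hmem : (Matrix.trace (exampleD δ s * (Xᴴ * exampleA μ * X))).re ∈ S := ⟨X, hXfeas, rfl⟩
  by_cases hbdd : BddBelow S
  · exact lt_of_le_of_lt (csInf_le hbdd hmem) hE
  · rw [Real.sInf_of_not_bddBelow hbdd]
    linarith only [mul_pos h1 hμ0]
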